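/- Let θ ∈ ℝ and let 𝓕_θ = {(x,y) ∈ ℝ² : 4 + x² - y² - 4θx = 0}. If (x,y) ∈ 𝓕_{θ'} with x ≠ 0, y² ≠ 4, where 2θ'² - 1 = θ, then F(x,y) ∈ 𝓕_θ, where F(x,y) = (2x²/(4-y²), y + x²y/(4-y²)). That is, F maps the horizontal hyperbola with parameter θ' into the one with parameter α(θ') for the Chebyshev map α(z) = 2z² - 1. -/
import Mathlib

/-- F maps the horizontal hyperbola 𝓕_{θ'} into 𝓕_θ with θ = 2θ'² - 1. -/
theorem horizontal_hyperbola_maps (θ θ' x y : ℝ)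
    (hθ : 2 * θ' ^ 2 - 1 = θ)
    (h : 4 + x ^ 2 - y ^ 2 - 4 * θ' * x = 0) (hx : x ≠ 0) (hy : y ^ 2 ≠ 4) :
    4 + (2 * x ^ 2 / (4 - y ^ 2)) ^ 2 - (y + x ^ 2 * y / (4 - y ^ 2)) ^ 2
      - 4 * θ * (2 * x ^ 2 / (4 - y ^ 2)) = 0 := by
  have hd : 4 - y ^ 2 ≠ 0 := fun h0 => hy (by linarith)
  have hθ' : θ' = (4 + x ^ 2 - y ^ 2) / (4 * x) := by
    field_simp
    linarith
  subst hθ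
  subst hθ'
  field_simp
  ring
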